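/- Let A be a commutative ring and 𝔞 a finitely generated ideal. Then every 𝔞-adic system {M_k} is induced by a module; specifically, it is isomorphic (as an inverse system) to the system {A/𝔞^{k+1} ⊗_A M̂} induced by its limit M̂. -/

import Mathlib

/-- The limit `M̂ = lim M_k` of an inverse system of `A`-modules, realized as the
submodule of compatible sequences in the product. -/
def adicLimit {A : Type*} [CommRing A] {M : ℕ → Type*}
    [∀ k, AddCommGroup (M k)] [∀ k, Module A (M k)]
    (ν : ∀ k, M (k + 1) →ₗ[A] M k) : Submodule A (∀ k, M k) where
  carrier := { f | ∀ k, ν k (f (k + 1)) = f k }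
  add_mem' := fun hf hg k => by simp [hf k, hg k]
  zero_mem' := fun k => by simp
  smul_mem' := fun r f hf k => by simp [hf k]

section Aux

variable {A : Type*} [CommRing A] {M : ℕ → Type*}
    [∀ k, AddCommGroup (M k)] [∀ k, Module A (M k)]
    (ν : ∀ k, M (k + 1) →ₗ[A] M k)

/-- Cast between fibers of the family `M` along an equality of indices. -/
def castM {i j : ℕ} (h : i = j) (x : M i) : M j := h ▸ x

theorem castM_self {i : ℕ} (h : i = i) (x : M i) : castM (M := M) h x = x := rfl

theorem castM_fun {f : ∀ m, M m} {i j : ℕ} (h : i = j) : castM (M := M) h (f i) = f j := by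
  subst h; rfl

theorem castM_castM {i j l : ℕ} (h : i = j) (h' : j = l) (x : M i) :
    castM (M := M) h' (castM (M := M) h x) = castM (h.trans h') x := by
  subst h; subst h'; rfl

theorem castM_zero {i j : ℕ} (h : i = j) : castM (M := M) h (0 : M i) = (0 : M j) := by
  subst h; rfl

theorem nu_castM {i j : ℕ} (h : i = j) (h' : i + 1 = j + 1) (x : M (i + 1)) :
    ν j (castM (M := M) h' x) = castM h (ν i x) := by
  subst h; rfl

/-- The composite transition map `M (n+j) → M n`. -/
def downTo (n : ℕ) : ∀ j, M (n + j) →ₗ[A] M n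
  | 0 => LinearMap.id
  | j + 1 => (downTo n j).comp (ν (n + j))

theorem nu_downTo (p : ℕ) : ∀ (j : ℕ) (h : (p + 1) + j = p + (j + 1)) (x : M ((p + 1) + j)),
    ν p (downTo ν (p + 1) j x) = downTo ν p (j + 1) (castM h x)
  | 0, h, x => by
      rw [castM_self]
      rfl
  | j + 1, h, x => by
      have h0 : (p + 1) + j = p + (j + 1) := by omega
      show ν p (downTo ν (p+1) j (ν ((p+1)+j) x)) =
        downTo ν p (j+1) (ν (p + (j+1)) (castM h x))
      rw [nu_downTo p j h0, nu_castM ν h0 h]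

theorem downTo_limit {f : ∀ n, M n} (hf : f ∈ adicLimit ν) :
    ∀ (j p : ℕ), downTo ν p j (f (p + j)) = f p
  | 0, p => rfl
  | j + 1, p => by
      show downTo ν p j (ν (p+j) (f ((p+j)+1))) = f p
      rw [hf (p + j), downTo_limit hf j p]

variable {a : Ideal A}

theorem adic_smul_top_eq_bot (hann : ∀ k (x : M k), ∀ r ∈ a ^ (k + 1), r • x = 0)
    (p q : ℕ) (hq : p + 1 ≤ q) : (a ^ q) • (⊤ : Submodule A (M p)) = ⊥ := by
  refine le_antisymm (Submodule.smul_le.2 fun r hr x _ => ?_) bot_le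
  have : r ∈ a ^ (p + 1) := Ideal.pow_le_pow_right hq hr
  simpa using hann p x r this

/-- A chain of successive lifts of `x` along the surjections `ν`. -/
noncomputable def adicChain (hsurj : ∀ k, Function.Surjective (ν k)) (k : ℕ) (x : M k) :
    ∀ j, M (k + j)
  | 0 => x
  | j + 1 => Function.surjInv (hsurj (k + j)) (adicChain hsurj k x j)

theorem nu_adicChain (hsurj : ∀ k, Function.Surjective (ν k)) (k : ℕ) (x : M k) (j : ℕ) :
    ν (k + j) (adicChain ν hsurj k x (j + 1)) = adicChain ν hsurj k x j :=
  Function.surjInv_eq (hsurj (k + j)) _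

theorem downTo_adicChain (hsurj : ∀ k, Function.Surjective (ν k)) (k : ℕ) (x : M k) :
    ∀ j, downTo ν k j (adicChain ν hsurj k x j) = x
  | 0 => rfl
  | j + 1 => by
      show downTo ν k j (ν (k+j) (adicChain ν hsurj k x (j+1))) = x
      rw [nu_adicChain, downTo_adicChain hsurj k x j]

theorem adicLimit_proj_surjective (hsurj : ∀ k, Function.Surjective (ν k)) (k : ℕ)
    (x : M k) : ∃ f ∈ adicLimit ν, f k = x := by
  refine ⟨fun n => downTo ν n k (castM (Nat.add_comm k n) (adicChain ν hsurj k x n)),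
    fun n => ?_, ?_⟩
  · have h1 : k + (n + 1) = (n + 1) + k := Nat.add_comm _ _
    have h0 : k + n = n + k := Nat.add_comm _ _
    have h4 : (n + 1) + k = n + (k + 1) := by omega
    have h13 : k + (n + 1) = n + (k + 1) := by omega
    show ν n (downTo ν (n + 1) k (castM h1 (adicChain ν hsurj k x (n + 1)))) = _
    rw [nu_downTo ν n k h4, castM_castM h1 h4]
    show downTo ν n k (ν (n + k) (castM (h1.trans h4) (adicChain ν hsurj k x (n+1)))) = _
    rw [nu_castM ν h0 (h1.trans h4), nu_adicChain]
  · show downTo ν k k (castM (Nat.add_comm k k) (adicChain ν hsurj k x k)) = x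
    rw [castM_self, downTo_adicChain]

/-- Writing an element of `span T • P` as a `T`-indexed combination. -/
theorem exists_rep {N' : Type*} [AddCommGroup N'] [Module A N'] (T : Finset A)
    (P : Submodule A N') {z : N'} (hz : z ∈ Ideal.span (T : Set A) • P) :
    ∃ c : A → N', (∀ g, c g ∈ P) ∧ ∑ g ∈ T, g • c g = z := by
  refine Submodule.smul_induction_on hz ?_ ?_
  · intro r hr n hn
    obtain ⟨f, -, hf⟩ := Submodule.mem_span_finset.1 hr
    refine ⟨fun g => f g • n, fun g => P.smul_mem _ hn, ?_⟩
    calc ∑ g ∈ T, g • f g • n = ∑ g ∈ T, (f g • g) • n := by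
          refine Finset.sum_congr rfl fun g _ => ?_
          rw [smul_smul, smul_eq_mul, mul_comm]
        _ = r • n := by rw [← Finset.sum_smul, hf]
  · rintro z₁ z₂ ⟨c₁, hc₁, hs₁⟩ ⟨c₂, hc₂, hs₂⟩
    refine ⟨c₁ + c₂, fun g => P.add_mem (hc₁ g) (hc₂ g), ?_⟩
    simp only [Pi.add_apply, smul_add, Finset.sum_add_distrib, hs₁, hs₂]

theorem nat_dep_choice {C : ℕ → Sort*} {R : ∀ m, C m → C (m + 1) → Prop} (c0 : C 0)
    (h : ∀ m (c : C m), ∃ c' : C (m + 1), R m c c') :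
    ∃ y : ∀ m, C m, y 0 = c0 ∧ ∀ m, R m (y m) (y (m + 1)) :=
  ⟨fun m => Nat.rec c0 (fun m prev => Classical.choose (h m prev)) m, rfl,
    fun m => Classical.choose_spec
      (h m (Nat.rec c0 (fun m prev => Classical.choose (h m prev)) m))⟩

end Aux

/-- Every `𝔞`-adic system `{M_k}` (for `𝔞` finitely generated) is induced by a module:
it is isomorphic, as an inverse system, to the system `{A/𝔞^{k+1} ⊗_A M̂} = {M̂/𝔞^{k+1}M̂}`
induced by its limit `M̂`, via the canonical maps coming from the projections `M̂ → M_k`. -/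
theorem adic_system_induced_by_limit {A : Type*} [CommRing A]
    (a : Ideal A) (ha : a.FG)
    (M : ℕ → Type*) [∀ k, AddCommGroup (M k)] [∀ k, Module A (M k)]
    (hann : ∀ k (x : M k), ∀ r ∈ a ^ (k + 1), r • x = 0)
    (ν : ∀ k, M (k + 1) →ₗ[A] M k)
    (hsurj : ∀ k, Function.Surjective (ν k))
    (hker : ∀ k, LinearMap.ker (ν k) = (a ^ (k + 1)) • (⊤ : Submodule A (M (k + 1)))) :
    ∃ e : ∀ k, ((↥(adicLimit ν)) ⧸
        ((a ^ (k + 1)) • (⊤ : Submodule A (↥(adicLimit ν))))) ≃ₗ[A] M k,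
      ∀ (k : ℕ) (f : ↥(adicLimit ν)),
        e k (Submodule.Quotient.mk f) = (f : ∀ n, M n) k := by
  classical
  set N := adicLimit ν with hN
  -- the projection maps
  let π : ∀ k, ↥N →ₗ[A] M k := fun k => (LinearMap.proj k).comp N.subtype
  have hπ : ∀ k (f : ↥N), π k f = (f : ∀ n, M n) k := fun _ _ => rfl
  have hπsurj : ∀ k, Function.Surjective (π k) := by
    intro k x
    obtain ⟨f, hf, hfk⟩ := adicLimit_proj_surjective ν hsurj k x
    exact ⟨⟨f, hf⟩, hfk⟩
  -- the hard inclusion: kernel of the projection is contained in `a^(k+1) • ⊤`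
  have hhard : ∀ k (f : ↥N), (f : ∀ n, M n) k = 0 →
      f ∈ (a ^ (k + 1)) • (⊤ : Submodule A ↥N) := by
    intro k f h0
    obtain ⟨T, hT⟩ := Submodule.FG.pow ha (k + 1)
    have hT' : Ideal.span (T : Set A) = a ^ (k + 1) := hT
    have hzero : ∀ p, p ≤ k → (f : ∀ n, M n) p = 0 := by
      intro p hp
      have h1 : k = p + (k - p) := by omega
      have h2 : (f : ∀ n, M n) (p + (k - p)) = 0 := by
        rw [← castM_fun (M := M) (f := (f : ∀ n, M n)) h1, h0, castM_zero]
      rw [← downTo_limit ν f.2 (k - p) p, h2, map_zero]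
    -- the recursive construction of approximate representations
    have stepEx : ∀ m (v : A → M m), (∑ g ∈ T, g • v g = (f : ∀ n, M n) m) →
        ∃ c : A → M (m + 1), (∑ g ∈ T, g • c g = (f : ∀ n, M n) (m + 1)) ∧
          ∀ g, ν m (c g) - v g ∈ (a ^ (m - k)) • (⊤ : Submodule A (M m)) := by
      intro m v hv
      rcases lt_or_ge m k with hmk | hmk
      · refine ⟨0, by simp [hzero (m + 1) (by omega)], fun g => ?_⟩
        have : a ^ (m - k) • (⊤ : Submodule A (M m)) = ⊤ := by
          rw [(by omega : m - k = 0), pow_zero, Ideal.one_eq_top, Submodule.top_smul]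
        rw [this]
        exact Submodule.mem_top
      · set w : A → M (m + 1) := fun g => Function.surjInv (hsurj m) (v g) with hw
        have hνw : ∀ g, ν m (w g) = v g := fun g => Function.surjInv_eq (hsurj m) _
        set d : M (m + 1) := (f : ∀ n, M n) (m + 1) - ∑ g ∈ T, g • w g with hd
        have hdker : d ∈ LinearMap.ker (ν m) := by
          have : ν m ((f : ∀ n, M n) (m + 1)) = (f : ∀ n, M n) m := f.2 m
          simp only [LinearMap.mem_ker, hd, map_sub, map_sum, map_smul, hνw, this, hv,
            sub_self]
        have hsplit : a ^ (m + 1) • (⊤ : Submodule A (M (m + 1))) =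
            Ideal.span (T : Set A) • ((a ^ (m - k)) • (⊤ : Submodule A (M (m + 1)))) := by
          rw [hT', ← Submodule.smul_assoc, Ideal.smul_eq_mul, ← pow_add,
            (by omega : k + 1 + (m - k) = m + 1)]
        rw [hker m, hsplit] at hdker
        obtain ⟨z, hzP, hzsum⟩ := exists_rep T _ hdker
        refine ⟨fun g => w g + z g, ?_, fun g => ?_⟩
        · simp only [smul_add, Finset.sum_add_distrib, hzsum, hd]
          abel
        · have : ν m (w g + z g) - v g = ν m (z g) := by
            rw [map_add, hνw]; abel
          rw [this]
          have : ν m (z g) ∈ Submodule.map (ν m) ((a ^ (m - k)) •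
              (⊤ : Submodule A (M (m + 1)))) := Submodule.mem_map_of_mem (hzP g)
          rw [Submodule.map_smul''] at this
          exact Submodule.smul_mono le_rfl le_top this
    obtain ⟨y, -, hQ⟩ := nat_dep_choice
      (C := fun m => {c : A → M m // ∑ g ∈ T, g • c g = (f : ∀ n, M n) m})
      (R := fun m c c' => ∀ g, ν m (c'.1 g) - c.1 g ∈ (a ^ (m - k)) •
        (⊤ : Submodule A (M m)))
      ⟨0, by simp [hzero 0 (Nat.zero_le k)]⟩
      (fun m c => by
        obtain ⟨c', h1, h2⟩ := stepEx m c.1 c.2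
        exact ⟨⟨c', h1⟩, h2⟩)
    -- the stabilized limits of the approximations
    set yh : A → ∀ p, M p := fun g p => downTo ν p (k + 1) ((y (p + (k + 1))).1 g) with hyh
    have hmem : ∀ g, yh g ∈ adicLimit ν := by
      intro g p
      have h : (p + 1) + (k + 1) = p + (k + 2) := by omega
      have e1 : ν p (yh g (p + 1)) = downTo ν p (k + 2) ((y (p + (k + 2))).1 g) := by
        rw [hyh]
        rw [nu_downTo ν p (k + 1) h, castM_fun (M := M) (f := fun m => (y m).1 g) h]
      rw [e1]
      have e2 : downTo ν p (k + 2) ((y (p + (k + 2))).1 g) =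
          downTo ν p (k + 1) (ν (p + (k + 1)) ((y (p + (k + 1) + 1)).1 g)) := rfl
      have hq := hQ (p + (k + 1)) g
      have e3 : ν (p + (k + 1)) ((y (p + (k + 1) + 1)).1 g) =
          (y (p + (k + 1))).1 g + (ν (p + (k + 1)) ((y (p + (k + 1) + 1)).1 g) -
            (y (p + (k + 1))).1 g) := by abel
      have hdmem : downTo ν p (k + 1) (ν (p + (k + 1)) ((y (p + (k + 1) + 1)).1 g) -
          (y (p + (k + 1))).1 g) = 0 := by
        have h1 : (ν (p + (k + 1)) ((y (p + (k + 1) + 1)).1 g) - (y (p + (k + 1))).1 g) ∈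
            (a ^ (p + 1)) • (⊤ : Submodule A (M (p + (k + 1)))) := by
          have := hq
          rwa [(by omega : p + (k + 1) - k = p + 1)] at this
        have h2 : downTo ν p (k + 1) (ν (p + (k + 1)) ((y (p + (k + 1) + 1)).1 g) -
            (y (p + (k + 1))).1 g) ∈ (a ^ (p + 1)) • (⊤ : Submodule A (M p)) := by
          have := Submodule.mem_map_of_mem (f := downTo ν p (k + 1)) h1
          rw [Submodule.map_smul''] at this
          exact Submodule.smul_mono le_rfl le_top this
        rw [adic_smul_top_eq_bot hann p (p + 1) le_rfl] at h2
        simpa using h2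
      rw [e2, e3, map_add, hdmem, add_zero]
    have hval : ∀ p, ∑ g ∈ T, g • yh g p = (f : ∀ n, M n) p := by
      intro p
      rw [hyh]
      have : ∑ g ∈ T, g • downTo ν p (k + 1) ((y (p + (k + 1))).1 g) =
          downTo ν p (k + 1) (∑ g ∈ T, g • (y (p + (k + 1))).1 g) := by
        rw [map_sum]
        exact Finset.sum_congr rfl fun g _ => (map_smul _ _ _).symm
      rw [this, (y (p + (k + 1))).2, downTo_limit ν f.2 (k + 1) p]
    -- assemble
    have hfeq : f = ∑ g ∈ T.attach, (g : A) • (⟨yh g, hmem g⟩ : ↥N) := by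
      apply Subtype.ext
      funext p
      have : ((∑ g ∈ T.attach, (g : A) • (⟨yh g, hmem g⟩ : ↥N) : ↥N) : ∀ n, M n) p =
          ∑ g ∈ T.attach, (g : A) • yh (g : A) p := by
        rw [← hπ p, map_sum]
        rfl
      rw [this, Finset.sum_attach T (fun g => g • yh g p), hval p]
    rw [hfeq]
    refine Submodule.sum_mem _ fun g _ => ?_
    have hg : (g : A) ∈ a ^ (k + 1) := by
      rw [← hT']
      exact Ideal.subset_span g.2
    exact Submodule.smul_mem_smul hg Submodule.mem_top
  have hπker : ∀ k, LinearMap.ker (π k) = (a ^ (k + 1)) • (⊤ : Submodule A ↥N) := by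
    intro k
    refine le_antisymm (fun f hf => hhard k f hf) (Submodule.smul_le.2 fun r hr x _ => ?_)
    show π k (r • x) = 0
    rw [map_smul, hπ]
    exact hann k _ r hr
  refine ⟨fun k => LinearEquiv.ofBijective
    (Submodule.liftQ _ (π k) (hπker k).ge) ⟨?_, ?_⟩, ?_⟩
  · rw [← LinearMap.ker_eq_bot]
    exact Submodule.ker_liftQ_eq_bot' _ _ (hπker k).symm
  · intro x
    obtain ⟨v, hv⟩ := hπsurj k x
    exact ⟨Submodule.Quotient.mk v, by rwa [Submodule.liftQ_apply]⟩
  · intro k f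
    show Submodule.liftQ _ (π k) (hπker k).ge (Submodule.Quotient.mk f) = _
    rfl
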